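/- Let τ ∈ (0, π), α ∈ (0, π), and ρ ∈ [0, π] satisfy cos(ρ) = −(cos(τ/2) + sin(α/2)) / (1 + cos(τ/2)·sin(α/2)). Then tan(τ/2)·cos(ρ) + cos(α/2)·sin(ρ) + tan(τ/2)·sin(α/2) = 0. -/

import Mathlib

set_option maxHeartbeats 1600000


open Real

/-- The threshold value ρ_thres in the angle-bisector parametrization: at
cos(ρ) = −(cos(τ/2)+sin(α/2))/(1+cos(τ/2)·sin(α/2)) the defining equation of
the boundary curve is satisfied. -/
theorem bisector_threshold (τ α ρ : ℝ)
    (hτ0 : 0 < τ) (hτ1 : τ < π) (hα0 : 0 < α) (hα1 : α < π)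
    (hρ0 : 0 ≤ ρ) (hρ1 : ρ ≤ π)
    (h : Real.cos ρ = -((Real.cos (τ / 2) + Real.sin (α / 2)) /
      (1 + Real.cos (τ / 2) * Real.sin (α / 2)))) :
    Real.tan (τ / 2) * Real.cos ρ + Real.cos (α / 2) * Real.sin ρ +
      Real.tan (τ / 2) * Real.sin (α / 2) = 0 := by
  have hcτ : 0 < Real.cos (τ / 2) := Real.cos_pos_of_mem_Ioo ⟨by linarith [Real.pi_pos], by linarith⟩
  have hsτ : 0 < Real.sin (τ / 2) := Real.sin_pos_of_pos_of_lt_pi (by linarith) (by linarith)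
  have hcα : 0 < Real.cos (α / 2) := Real.cos_pos_of_mem_Ioo ⟨by linarith [Real.pi_pos], by linarith⟩
  have hsα : 0 < Real.sin (α / 2) := Real.sin_pos_of_pos_of_lt_pi (by linarith) (by linarith)
  have hden : 0 < 1 + Real.cos (τ / 2) * Real.sin (α / 2) := by positivity
  have hsρ : 0 ≤ Real.sin ρ := Real.sin_nonneg_of_nonneg_of_le_pi hρ0 hρ1
  have pyτ := Real.sin_sq_add_cos_sq (τ / 2)
  have pyα := Real.sin_sq_add_cos_sq (α / 2)
  have pyρ := Real.sin_sq_add_cos_sq ρ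
  have hX : (0:ℝ) ≤ Real.sin (τ / 2) * Real.cos (α / 2) / (1 + Real.cos (τ / 2) * Real.sin (α / 2)) := by positivity
  have hsq : Real.sin ρ ^ 2 = (Real.sin (τ / 2) * Real.cos (α / 2) / (1 + Real.cos (τ / 2) * Real.sin (α / 2))) ^ 2 := by
    have : Real.sin ρ ^ 2 = 1 - Real.cos ρ ^ 2 := by linarith
    rw [this, h]
    field_simp
    nlinarith [pyτ, pyα]
  have hsin : Real.sin ρ = Real.sin (τ / 2) * Real.cos (α / 2) / (1 + Real.cos (τ / 2) * Real.sin (α / 2)) := by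
    nlinarith [sq_nonneg (Real.sin ρ - Real.sin (τ / 2) * Real.cos (α / 2) / (1 + Real.cos (τ / 2) * Real.sin (α / 2)))]
  rw [Real.tan_eq_sin_div_cos, h, hsin]
  have hcτ' : Real.cos (τ/2) ≠ 0 := ne_of_gt hcτ
  have hd' : (1 + Real.cos (τ / 2) * Real.sin (α / 2)) ≠ 0 := ne_of_gt hden
  field_simp
  linear_combination (Real.sin (τ/2) * Real.cos (τ/2)) * pyα
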